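/- Let K be a compact Lie group and let U = ⊕_{n ∈ ℕ} U_n be a countably infinite orthogonal direct sum of copies of a fixed finite-dimensional orthogonal K-representation U_0 (so U_n ≅ U_0 for all n), equipped with the shift embedding P : U → U sending (u_0, u_1, ...) to (0, u_0, u_1, ...). Let L ≤ K and let T be a finite L-set, and let Conf^L_T(U) denote the space of L-equivariant injections T → U with the subspace topology from the product U^T. Then Conf^L_T(U) is either empty or contractible. -/
import Mathlib


noncomputable section

open Filter

/-- The countably infinite direct sum `U = ⊕_{n ∈ ℕ} U₀` of copies of `U₀`,
realized as the eventually-zero sequences in the product `ℕ → U₀`, with the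
subspace topology. -/
def DirectSumUniverse (U₀ : Type*) [NormedAddCommGroup U₀] : Type _ :=
  {u : ℕ → U₀ // ∀ᶠ n in atTop, u n = 0}

instance (U₀ : Type*) [NormedAddCommGroup U₀] :
    TopologicalSpace (DirectSumUniverse U₀) :=
  inferInstanceAs (TopologicalSpace {u : ℕ → U₀ // ∀ᶠ n in atTop, u n = 0})

/-- The space of `L`-equivariant `T`-configurations in `U = ⊕_ℕ U₀`:
injective maps `T → U` that are equivariant for the `L`-actions (where
`L ≤ K` acts on each summand `U₀` through linear isometries via `ρ` and on `T`
via `φ`), with the subspace topology from the product `U^T`. -/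
def EquivariantConfigurations {K : Type*} [Group K] (L : Subgroup K)
    (U₀ : Type*) [NormedAddCommGroup U₀] [InnerProductSpace ℝ U₀]
    (ρ : L →* (U₀ ≃ₗᵢ[ℝ] U₀)) (T : Type*) (φ : L →* Equiv.Perm T) : Type _ :=
  {c : T → DirectSumUniverse U₀ //
    Function.Injective c ∧
      ∀ (l : L) (t : T), (fun n => ρ l ((c t).1 n)) = (c (φ l t)).1}

instance {K : Type*} [Group K] (L : Subgroup K)
    (U₀ : Type*) [NormedAddCommGroup U₀] [InnerProductSpace ℝ U₀]
    (ρ : L →* (U₀ ≃ₗᵢ[ℝ] U₀)) (T : Type*) (φ : L →* Equiv.Perm T) :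
    TopologicalSpace (EquivariantConfigurations L U₀ ρ T φ) :=
  inferInstanceAs (TopologicalSpace
    {c : T → DirectSumUniverse U₀ //
      Function.Injective c ∧
        ∀ (l : L) (t : T), (fun n => ρ l ((c t).1 n)) = (c (φ l t)).1})

set_option linter.unusedSectionVars false

section Aux
variable {U₀ : Type*} [NormedAddCommGroup U₀] [Module ℝ U₀]

def evenEmb (u : ℕ → U₀) : ℕ → U₀ := fun n => if n % 2 = 0 then u (n / 2) else 0
def oddEmb (u : ℕ → U₀) : ℕ → U₀ := fun n => if n % 2 = 1 then u (n / 2) else 0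

lemma evenEmb_even (u : ℕ → U₀) (m : ℕ) : evenEmb u (2 * m) = u m := by
  have h1 : (2 * m) % 2 = 0 := by omega
  have h2 : (2 * m) / 2 = m := by omega
  simp [evenEmb, h1, h2]

lemma oddEmb_odd (u : ℕ → U₀) (m : ℕ) : oddEmb u (2 * m + 1) = u m := by
  have h1 : (2 * m + 1) % 2 = 1 := by omega
  have h2 : (2 * m + 1) / 2 = m := by omega
  simp [oddEmb, h1, h2]

lemma evenEmb_inj : Function.Injective (evenEmb (U₀ := U₀)) := by
  intro u v h
  funext m
  have := congrFun h (2 * m)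
  rwa [evenEmb_even, evenEmb_even] at this

lemma oddEmb_inj : Function.Injective (oddEmb (U₀ := U₀)) := by
  intro u v h
  funext m
  have := congrFun h (2 * m + 1)
  rwa [oddEmb_odd, oddEmb_odd] at this

lemma evenEmb_eventually {u : ℕ → U₀} (h : ∀ᶠ n in atTop, u n = 0) :
    ∀ᶠ n in atTop, evenEmb u n = 0 := by
  obtain ⟨N, hN⟩ := eventually_atTop.1 h
  refine eventually_atTop.2 ⟨2 * N, fun n hn => ?_⟩
  unfold evenEmb
  split_ifs with h'
  · exact hN _ (by omega)
  · rfl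

lemma oddEmb_eventually {u : ℕ → U₀} (h : ∀ᶠ n in atTop, u n = 0) :
    ∀ᶠ n in atTop, oddEmb u n = 0 := by
  obtain ⟨N, hN⟩ := eventually_atTop.1 h
  refine eventually_atTop.2 ⟨2 * N + 1, fun n hn => ?_⟩
  unfold oddEmb
  split_ifs with h'
  · exact hN _ (by omega)
  · rfl

lemma evenEmb_comp (g : U₀ → U₀) (hg : g 0 = 0) (u : ℕ → U₀) :
    (fun n => g (evenEmb u n)) = evenEmb (fun n => g (u n)) := by
  funext n; unfold evenEmb; split_ifs <;> simp [hg]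

lemma oddEmb_comp (g : U₀ → U₀) (hg : g 0 = 0) (u : ℕ → U₀) :
    (fun n => g (oddEmb u n)) = oddEmb (fun n => g (u n)) := by
  funext n; unfold oddEmb; split_ifs <;> simp [hg]

lemma evenEmb_homotopy_ker (t : ℝ) (ht : 0 ≤ t) (w : ℕ → U₀)
    (hw : ∀ᶠ n in atTop, w n = 0)
    (h : ∀ n, (1 - t) • w n + t • evenEmb w n = 0) : ∀ n, w n = 0 := by
  rcases eq_or_lt_of_le ht with rfl | ht'
  · intro n; simpa using h n
  obtain ⟨N, hN⟩ := eventually_atTop.1 hw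
  have key : ∀ d n, N ≤ n + d → w n = 0 := by
    intro d
    induction d with
    | zero => intro n hn; exact hN n (by omega)
    | succ d ih =>
      intro n hn
      by_cases hnN : N ≤ n
      · exact hN n hnN
      rcases n with _ | k
      · have h0 := h 0
        have hE : evenEmb w 0 = w 0 := by simp [evenEmb]
        rw [hE, ← add_smul] at h0
        simpa using h0
      · have h2 : w (2 * (k + 1)) = 0 := ih (2 * (k + 1)) (by omega)
        have he := h (2 * (k + 1))
        rw [evenEmb_even, h2] at he
        simp only [smul_zero, zero_add] at he
        rcases smul_eq_zero.mp he with h' | h'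
        · exact absurd h' (by positivity)
        · exact h'
  intro n
  exact key N n (by omega)

lemma inj1 (t : ℝ) (ht : 0 ≤ t) {u v : ℕ → U₀}
    (hu : ∀ᶠ n in atTop, u n = 0) (hv : ∀ᶠ n in atTop, v n = 0)
    (h : (fun n => (1 - t) • u n + t • evenEmb u n)
        = fun n => (1 - t) • v n + t • evenEmb v n) :
    u = v := by
  have hk := evenEmb_homotopy_ker t ht (fun n => u n - v n)
    (by filter_upwards [hu, hv] with n h1 h2; simp [h1, h2])
    (fun n => by
      have hthis := congrFun h n
      have hE : evenEmb (fun n => u n - v n) n = evenEmb u n - evenEmb v n := by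
        unfold evenEmb; split_ifs <;> simp
      simp only [hE, smul_sub]
      rw [sub_add_sub_comm, sub_eq_zero]
      exact hthis)
  funext n
  exact sub_eq_zero.mp (hk n)

end Aux


section Main

variable {K : Type*} [Group K] (L : Subgroup K) (U₀ : Type*)
  [NormedAddCommGroup U₀] [InnerProductSpace ℝ U₀]
  (ρ : L →* (U₀ ≃ₗᵢ[ℝ] U₀)) (T : Type*) (φ : L →* Equiv.Perm T)

local notation "E" => EquivariantConfigurations L U₀ ρ T φ

lemma conf_ext {a b : E} (h : ∀ s n, ((a.1 s).1 n : U₀) = (b.1 s).1 n) : a = b :=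
  Subtype.ext (funext fun s => Subtype.ext (funext (h s)))

lemma continuous_valC (s : T) (n : ℕ) :
    Continuous fun c : E => ((c.1 s).1 n : U₀) :=
  (continuous_apply n).comp (continuous_subtype_val.comp
    ((continuous_apply s).comp continuous_subtype_val))

lemma continuous_conf {α : Type*} [TopologicalSpace α] (f : α → E)
    (h : ∀ s n, Continuous fun a => (((f a).1 s).1 n : U₀)) : Continuous f := by
  have step : ∀ s : T, Continuous fun a => (f a).1 s := fun s =>
    Continuous.subtype_mk (continuous_pi fun n => h s n) (fun a => ((f a).1 s).2)
  exact Continuous.subtype_mk (continuous_pi step) (fun a => (f a).2)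

/-- First straight-line homotopy: from a configuration to its even-embedded shift. -/
def hmap₁ (t : unitInterval) (c : E) : E :=
  ⟨fun s => ⟨fun n => (1 - (t : ℝ)) • (c.1 s).1 n + (t : ℝ) • evenEmb (c.1 s).1 n,
      by
        filter_upwards [(c.1 s).2, evenEmb_eventually (c.1 s).2] with n h1 h2
        simp [h1, h2]⟩,
    by
      intro s s' h
      have h' := congrArg Subtype.val h
      have := inj1 (t : ℝ) t.2.1 (c.1 s).2 (c.1 s').2 h'
      exact c.2.1 (Subtype.ext this),
    by
      intro l s
      funext n
      show ρ l ((1 - (t : ℝ)) • (c.1 s).1 n + (t : ℝ) • evenEmb (c.1 s).1 n)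
        = (1 - (t : ℝ)) • (c.1 (φ l s)).1 n + (t : ℝ) • evenEmb (c.1 (φ l s)).1 n
      have hc : ρ l ((c.1 s).1 n) = (c.1 (φ l s)).1 n := congrFun (c.2.2 l s) n
      have hEc : ρ l (evenEmb (c.1 s).1 n) = evenEmb (c.1 (φ l s)).1 n := by
        have h2 := evenEmb_comp (⇑(ρ l)) (map_zero (ρ l)) (c.1 s).1
        rw [c.2.2 l s] at h2
        exact congrFun h2 n
      rw [map_add, (ρ l).map_smul, (ρ l).map_smul, hc, hEc]⟩

/-- Second straight-line homotopy: from the even-embedded configuration to the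
odd-embedded fixed configuration `c₀`. -/
def hmap₂ (c₀ : E) (t : unitInterval) (c : E) : E :=
  ⟨fun s => ⟨fun n => (1 - (t : ℝ)) • evenEmb (c.1 s).1 n + (t : ℝ) • oddEmb (c₀.1 s).1 n,
      by
        filter_upwards [evenEmb_eventually (c.1 s).2, oddEmb_eventually (c₀.1 s).2]
          with n h1 h2
        simp [h1, h2]⟩,
    by
      intro s s' h
      have h' := congrArg Subtype.val h
      by_cases ht : (t : ℝ) = 1
      · apply c₀.2.1
        apply Subtype.ext
        apply oddEmb_inj
        funext n
        have hn := congrFun h' n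
        rw [ht] at hn
        simpa using hn
      · apply c.2.1
        apply Subtype.ext
        apply evenEmb_inj
        funext n
        have hn := congrFun h' n
        simp only [] at hn
        rcases Nat.even_or_odd n with he | ho
        · have h0 : n % 2 = 0 := Nat.even_iff.mp he
          have hodd : ∀ u : ℕ → U₀, oddEmb u n = 0 := fun u => by
            unfold oddEmb; simp [h0]
          rw [hodd, hodd, smul_zero, add_zero, add_zero] at hn
          have h1t : (1 - (t : ℝ)) ≠ 0 := sub_ne_zero.mpr (fun h => ht h.symm)
          exact smul_right_injective U₀ h1t hn
        · have h1 : n % 2 = 1 := Nat.odd_iff.mp ho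
          have hev : ∀ u : ℕ → U₀, evenEmb u n = 0 := fun u => by
            unfold evenEmb; simp [h1]
          rw [hev, hev],
    by
      intro l s
      funext n
      show ρ l ((1 - (t : ℝ)) • evenEmb (c.1 s).1 n + (t : ℝ) • oddEmb (c₀.1 s).1 n)
        = (1 - (t : ℝ)) • evenEmb (c.1 (φ l s)).1 n + (t : ℝ) • oddEmb (c₀.1 (φ l s)).1 n
      have hEc : ρ l (evenEmb (c.1 s).1 n) = evenEmb (c.1 (φ l s)).1 n := by
        have h2 := evenEmb_comp (⇑(ρ l)) (map_zero (ρ l)) (c.1 s).1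
        rw [c.2.2 l s] at h2
        exact congrFun h2 n
      have hOc : ρ l (oddEmb (c₀.1 s).1 n) = oddEmb (c₀.1 (φ l s)).1 n := by
        have h2 := oddEmb_comp (⇑(ρ l)) (map_zero (ρ l)) (c₀.1 s).1
        rw [c₀.2.2 l s] at h2
        exact congrFun h2 n
      rw [map_add, (ρ l).map_smul, (ρ l).map_smul, hEc, hOc]⟩

/-- The midpoint map `c ↦ evenEmb ∘ c` as a continuous self-map. -/
def midCM : C(E, E) :=
  ⟨fun c => hmap₁ L U₀ ρ T φ 1 c, by
    apply continuous_conf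
    intro s n
    show Continuous fun c : E => (1 - ((1 : unitInterval) : ℝ)) • (c.1 s).1 n
        + ((1 : unitInterval) : ℝ) • evenEmb (c.1 s).1 n
    have hv : ∀ m, Continuous fun c : E => ((c.1 s).1 m : U₀) :=
      fun m => continuous_valC L U₀ ρ T φ s m
    unfold evenEmb
    split_ifs with h
    · exact (continuous_const.smul (hv n)).add (continuous_const.smul (hv (n / 2)))
    · exact (continuous_const.smul (hv n)).add (continuous_const.smul continuous_const)⟩

def H₁ : (ContinuousMap.id E).Homotopy (midCM L U₀ ρ T φ) := {
  toFun := fun p => hmap₁ L U₀ ρ T φ p.1 p.2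
  continuous_toFun := by
    apply continuous_conf
    intro s n
    show Continuous fun p : unitInterval × E =>
      (1 - (p.1 : ℝ)) • ((p.2.1 s).1 n) + (p.1 : ℝ) • evenEmb ((p.2.1 s).1) n
    have ht : Continuous fun p : unitInterval × E => (p.1 : ℝ) :=
      continuous_subtype_val.comp continuous_fst
    have hv : ∀ m, Continuous fun p : unitInterval × E => ((p.2.1 s).1 m : U₀) :=
      fun m => (continuous_valC L U₀ ρ T φ s m).comp continuous_snd
    unfold evenEmb
    split_ifs with h
    · exact ((continuous_const.sub ht).smul (hv n)).add (ht.smul (hv (n / 2)))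
    · exact ((continuous_const.sub ht).smul (hv n)).add (ht.smul continuous_const)
  map_zero_left := fun c => by
    apply conf_ext
    intro s n
    show (1 - ((0 : unitInterval) : ℝ)) • (c.1 s).1 n
        + ((0 : unitInterval) : ℝ) • evenEmb (c.1 s).1 n = (c.1 s).1 n
    simp
  map_one_left := fun c => rfl }

def endConf (c₀ : E) : E := hmap₂ L U₀ ρ T φ c₀ 1 c₀

def H₂ (c₀ : E) :
    (midCM L U₀ ρ T φ).Homotopy (ContinuousMap.const E (endConf L U₀ ρ T φ c₀)) := {
  toFun := fun p => hmap₂ L U₀ ρ T φ c₀ p.1 p.2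
  continuous_toFun := by
    apply continuous_conf
    intro s n
    show Continuous fun p : unitInterval × E =>
      (1 - (p.1 : ℝ)) • evenEmb ((p.2.1 s).1) n + (p.1 : ℝ) • oddEmb ((c₀.1 s).1) n
    have ht : Continuous fun p : unitInterval × E => (p.1 : ℝ) :=
      continuous_subtype_val.comp continuous_fst
    have hv : ∀ m, Continuous fun p : unitInterval × E => ((p.2.1 s).1 m : U₀) :=
      fun m => (continuous_valC L U₀ ρ T φ s m).comp continuous_snd
    unfold evenEmb
    split_ifs with h
    · exact ((continuous_const.sub ht).smul (hv (n / 2))).add (ht.smul continuous_const)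
    · exact ((continuous_const.sub ht).smul continuous_const).add (ht.smul continuous_const)
  map_zero_left := fun c => by
    apply conf_ext
    intro s n
    show (1 - ((0 : unitInterval) : ℝ)) • evenEmb (c.1 s).1 n
        + ((0 : unitInterval) : ℝ) • oddEmb (c₀.1 s).1 n
      = (1 - ((1 : unitInterval) : ℝ)) • (c.1 s).1 n
        + ((1 : unitInterval) : ℝ) • evenEmb (c.1 s).1 n
    simp
  map_one_left := fun c => by
    apply conf_ext
    intro s n
    show (1 - ((1 : unitInterval) : ℝ)) • evenEmb (c.1 s).1 n
        + ((1 : unitInterval) : ℝ) • oddEmb (c₀.1 s).1 n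
      = (1 - ((1 : unitInterval) : ℝ)) • evenEmb (c₀.1 s).1 n
        + ((1 : unitInterval) : ℝ) • oddEmb (c₀.1 s).1 n
    simp }

end Main

/-- **Spaces of equivariant configurations in a universe are empty or
contractible.**  Let `L ≤ K`, let `U₀` be a finite-dimensional real inner
product space on which `L` acts by linear isometries, let
`U = ⊕_{n ∈ ℕ} U₀`, and let `T` be a finite `L`-set.  Then the space
`Conf^L_T(U)` of `L`-equivariant injections `T → U` is either empty or
contractible. -/
theorem equivariant_configurations_empty_or_contractible
    {K : Type*} [Group K] (L : Subgroup K)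
    (U₀ : Type*) [NormedAddCommGroup U₀] [InnerProductSpace ℝ U₀]
    [FiniteDimensional ℝ U₀]
    (ρ : L →* (U₀ ≃ₗᵢ[ℝ] U₀)) (T : Type*) [Fintype T]
    (φ : L →* Equiv.Perm T) :
    IsEmpty (EquivariantConfigurations L U₀ ρ T φ) ∨
      ContractibleSpace (EquivariantConfigurations L U₀ ρ T φ) := by
  rcases isEmpty_or_nonempty (EquivariantConfigurations L U₀ ρ T φ) with he | hne
  · exact Or.inl he
  obtain ⟨c₀⟩ := hne
  right
  rw [contractible_iff_id_nullhomotopic]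
  exact ⟨endConf L U₀ ρ T φ c₀, ⟨(H₁ L U₀ ρ T φ).trans (H₂ L U₀ ρ T φ c₀)⟩⟩

end
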